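/- Let s, λ : ℝ → ℝ with s continuously differentiable, nondecreasing, valued in [0,1], and λ Lipschitz continuous, nondecreasing with λ(0) = 0. Define Φ(τ) = ∫₀^τ a·s'(a)·λ'(s(a)) da (where λ' exists a.e.). Then for all real a, b: b·(λ(s(b)) - λ(s(a))) ≥ Φ(b) - Φ(a). -/

import Mathlib

open MeasureTheory intervalIntegral

/-- With `s` C¹ nondecreasing valued in `[0,1]`, `lam` C¹ nondecreasing with
`lam 0 = 0`, and `Φ τ = ∫₀^τ a s'(a) lam'(s a) da`, one has
`b (lam (s b) - lam (s a)) ≥ Φ b - Φ a` for all `a b`. -/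
theorem stmt_4 (s lam : ℝ → ℝ)
    (hs : ContDiff ℝ 1 s)
    (hsmono : Monotone s)
    (hsrange : ∀ x, s x ∈ Set.Icc (0:ℝ) 1)
    (hlam : ContDiff ℝ 1 lam)
    (hlammono : Monotone lam)
    (hlam0 : lam 0 = 0)
    (Φ : ℝ → ℝ)
    (hΦ : ∀ τ, Φ τ = ∫ a in (0:ℝ)..τ, a * deriv s a * deriv lam (s a)) :
    ∀ a b : ℝ, Φ b - Φ a ≤ b * (lam (s b) - lam (s a)) := by
  intro a b
  set g : ℝ → ℝ := fun x => lam (s x) with hg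
  have hdg : ∀ x : ℝ, HasDerivAt g (deriv lam (s x) * deriv s x) x := fun x =>
    ((hlam.differentiable one_ne_zero (s x)).hasDerivAt).comp x
      ((hs.differentiable one_ne_zero x).hasDerivAt)
  have hgc : Continuous g := hlam.continuous.comp hs.continuous
  have hdc : Continuous fun x : ℝ => deriv lam (s x) * deriv s x :=
    ((hlam.continuous_deriv le_rfl).comp hs.continuous).mul (hs.continuous_deriv le_rfl)
  have hgmono : Monotone g := fun x y hxy => hlammono (hsmono hxy)
  have hfc : Continuous fun x : ℝ => x * deriv s x * deriv lam (s x) :=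
    (continuous_id.mul (hs.continuous_deriv le_rfl)).mul
      ((hlam.continuous_deriv le_rfl).comp hs.continuous)
  -- Φ b - Φ a = ∫ a..b x * (deriv lam (s x) * deriv s x)
  have hsub : Φ b - Φ a = ∫ x in a..b, x * (deriv lam (s x) * deriv s x) := by
    rw [hΦ a, hΦ b,
      intervalIntegral.integral_interval_sub_left (hfc.intervalIntegrable _ _)
        (hfc.intervalIntegrable _ _)]
    apply intervalIntegral.integral_congr
    intro x _; ring
  -- integration by parts
  have hibp : (∫ x in a..b, x * (deriv lam (s x) * deriv s x)) =
      b * g b - a * g a - ∫ x in a..b, 1 * g x := by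
    apply intervalIntegral.integral_mul_deriv_eq_deriv_mul
      (u := fun x => x) (u' := fun _ => 1) (v := g)
      (v' := fun x => deriv lam (s x) * deriv s x)
    · intro x _; exact hasDerivAt_id x
    · intro x _; exact hdg x
    · exact (continuous_const).intervalIntegrable _ _
    · exact hdc.intervalIntegrable _ _
  have hconst : (b - a) * g a ≤ ∫ x in a..b, g x := by
    rcases le_total a b with h | h
    · have := intervalIntegral.integral_mono_on h
        (_root_.intervalIntegrable_const (μ := volume) (c := g a)) (hgc.intervalIntegrable a b)
        (fun x hx => hgmono hx.1)
      simpa [smul_eq_mul] using this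
    · have h2 := intervalIntegral.integral_mono_on h
        (hgc.intervalIntegrable b a) (_root_.intervalIntegrable_const (μ := volume) (c := g a))
        (fun x hx => hgmono hx.2)
      rw [intervalIntegral.integral_symm]
      simp only [intervalIntegral.integral_const, smul_eq_mul] at h2 ⊢
      linarith
  have : (∫ x in a..b, 1 * g x) = ∫ x in a..b, g x := by
    apply intervalIntegral.integral_congr; intro x _; ring
  rw [hsub, hibp, this]
  have hgb : lam (s b) = g b := rfl
  have hga : lam (s a) = g a := rfl
  rw [hgb, hga]
  linarith
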